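/- The numerical range of the N×N nilpotent Jordan block J₀ (ones on the superdiagonal, zeros elsewhere) is the closed disc centered at the origin of radius cos(π/(N+1)). -/

import Mathlib

open Real Finset

noncomputable def opNorm {N : ℕ} (A : Matrix (Fin N) (Fin N) ℂ) : ℝ :=
  ‖Matrix.toEuclideanCLM (𝕜 := ℂ) A‖

noncomputable def numRad {N : ℕ} (A : Matrix (Fin N) (Fin N) ℂ) : ℝ :=
  sSup {r : ℝ | ∃ x : EuclideanSpace ℂ (Fin N), ‖x‖ = 1 ∧
    r = ‖(inner (𝕜 := ℂ) x (Matrix.toEuclideanCLM (𝕜 := ℂ) A x) : ℂ)‖}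

noncomputable def numRange {N : ℕ} (A : Matrix (Fin N) (Fin N) ℂ) : Set ℂ :=
  {z : ℂ | ∃ x : EuclideanSpace ℂ (Fin N), ‖x‖ = 1 ∧
    z = inner (𝕜 := ℂ) x (Matrix.toEuclideanCLM (𝕜 := ℂ) A x)}


def J0 (N : ℕ) : Matrix (Fin N) (Fin N) ℂ :=
  Matrix.of fun i j => if (j : ℕ) = (i : ℕ) + 1 then 1 else 0

/-! ### auxiliary lemmas -/

lemma inner_J0 {N : ℕ} (x : EuclideanSpace ℂ (Fin N)) :
    inner (𝕜 := ℂ) x (Matrix.toEuclideanCLM (𝕜 := ℂ) (J0 N) x) =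
      ∑ i : Fin N, (starRingEnd ℂ) (x i) *
        (if h : (i : ℕ) + 1 < N then x ⟨(i : ℕ) + 1, h⟩ else 0) := by
  rw [PiLp.inner_apply]
  congr 1
  ext i
  rw [RCLike.inner_apply']
  congr 1
  have h0 := congrFun (Matrix.ofLp_toEuclideanCLM (𝕜 := ℂ) (J0 N) x) i
  have : (Matrix.toEuclideanCLM (𝕜 := ℂ) (J0 N) x) i
      = (Matrix.toLin' (J0 N)) ((WithLp.equiv 2 (Fin N → ℂ)) x) i := h0
  rw [this, Matrix.toLin'_apply, Matrix.mulVec, dotProduct]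
  simp only [J0, Matrix.of_apply]
  by_cases h : (i : ℕ) + 1 < N
  · rw [dif_pos h, Finset.sum_eq_single (⟨(i:ℕ)+1, h⟩ : Fin N)]
    · simp
    · intro b _ hb
      rw [if_neg, zero_mul]
      intro hc; exact hb (Fin.ext hc)
    · simp
  · rw [dif_neg h, Finset.sum_eq_zero]
    intro b _
    rw [if_neg, zero_mul]
    intro hc
    exact h (hc ▸ b.isLt)

noncomputable def Wt (N : ℕ) (n : ℕ) : ℝ := Real.sin (n * (Real.pi / (N + 1)))

lemma Wt_zero {N : ℕ} : Wt N 0 = 0 := by simp [Wt]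

lemma Wt_top {N : ℕ} : Wt N (N + 1) = 0 := by
  have : ((N : ℝ) + 1) * (Real.pi / (N + 1)) = Real.pi := by
    field_simp
  simp only [Wt]
  push_cast
  simp [this]

lemma Wt_pos {N n : ℕ} (hn1 : 1 ≤ n) (hn2 : n ≤ N) : 0 < Wt N n := by
  apply Real.sin_pos_of_pos_of_lt_pi
  · have h1 : (1:ℝ) ≤ (n:ℝ) := by exact_mod_cast hn1
    have : 0 < Real.pi / (N + 1) := by positivity
    nlinarith
  · have h2 : (n:ℝ) ≤ (N:ℝ) := by exact_mod_cast hn2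
    have hpi := Real.pi_pos
    have hden : (0:ℝ) < (N:ℝ) + 1 := by positivity
    rw [mul_div_assoc'] at *
    rw [div_lt_iff₀ hden]
    nlinarith

lemma Wt_rec {N : ℕ} (n : ℕ) :
    Wt N (n + 2) + Wt N n = 2 * Real.cos (Real.pi / (N+1)) * Wt N (n+1) := by
  have h1 : ((n : ℝ) + 2) * (Real.pi / (N + 1))
      = ((n : ℝ)+1) * (Real.pi / (N+1)) + Real.pi / (N+1) := by ring
  have h2 : (n : ℝ) * (Real.pi / (N + 1))
      = ((n : ℝ)+1) * (Real.pi / (N+1)) - Real.pi / (N+1) := by ring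
  simp only [Wt]
  push_cast
  rw [h1, h2, Real.sin_add, Real.sin_sub]
  ring

lemma shift_sum' {N : ℕ} (f : ℕ → ℝ) (h0 : f 0 = 0) (hNend : f N = 0) :
    ∑ n ∈ range N, f n = ∑ n ∈ range N, f (n+1) := by
  have h1 : ∑ n ∈ range (N+1), f n = (∑ n ∈ range N, f (n+1)) + f 0 :=
    Finset.sum_range_succ' f N
  have h2 : ∑ n ∈ range (N+1), f n = (∑ n ∈ range N, f n) + f N :=
    Finset.sum_range_succ f N
  rw [h0] at h1; rw [hNend] at h2; linarith

lemma quad_bound {N : ℕ} (b : ℕ → ℝ) (hb : ∀ n, N ≤ n → b n = 0) :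
    ∑ n ∈ range N, b n * b (n+1) ≤ Real.cos (Real.pi/(N+1)) * ∑ n ∈ range N, (b n)^2 := by
  have key : ∀ n ∈ range N, b n * b (n+1) ≤
      (Wt N (n+2) / Wt N (n+1)) * (b n)^2 / 2 + (Wt N (n+1) / Wt N (n+2)) * (b (n+1))^2 / 2 := by
    intro n hn
    rw [Finset.mem_range] at hn
    by_cases h : n + 1 = N
    · have hb1 : b (n+1) = 0 := by rw [h]; exact hb N le_rfl
      have hW : Wt N (n+2) = 0 := by
        have : n + 2 = N + 1 := by omega
        rw [this]; exact Wt_top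
      simp [hb1, hW]
    · have h1 : 0 < Wt N (n+1) := Wt_pos (by omega) (by omega)
      have h2 : 0 < Wt N (n+2) := Wt_pos (by omega) (by omega)
      have heq : (Wt N (n+2) / Wt N (n+1)) * (b n)^2 / 2
            + (Wt N (n+1) / Wt N (n+2)) * (b (n+1))^2 / 2
          = ((Wt N (n+2))^2 * (b n)^2 + (Wt N (n+1))^2 * (b (n+1))^2)
            / (2 * Wt N (n+1) * Wt N (n+2)) := by
        field_simp
      rw [heq, le_div_iff₀ (by positivity)]
      nlinarith [sq_nonneg (Wt N (n+2) * b n - Wt N (n+1) * b (n+1))]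
  have hshift : ∑ n ∈ range N, (Wt N n / Wt N (n+1)) * (b n)^2 / 2
      = ∑ n ∈ range N, (Wt N (n+1) / Wt N (n+2)) * (b (n+1))^2 / 2 := by
    apply shift_sum' (fun m => (Wt N m / Wt N (m+1)) * (b m)^2 / 2)
    · simp [Wt_zero]
    · simp [hb N le_rfl]
  calc ∑ n ∈ range N, b n * b (n+1)
      ≤ ∑ n ∈ range N, ((Wt N (n+2) / Wt N (n+1)) * (b n)^2 / 2
          + (Wt N (n+1) / Wt N (n+2)) * (b (n+1))^2 / 2) :=
        Finset.sum_le_sum key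
    _ = ∑ n ∈ range N, ((Wt N (n+2) / Wt N (n+1)) * (b n)^2 / 2
          + (Wt N n / Wt N (n+1)) * (b n)^2 / 2) := by
        rw [Finset.sum_add_distrib, Finset.sum_add_distrib, ← hshift]
    _ = ∑ n ∈ range N, Real.cos (Real.pi/(N+1)) * (b n)^2 := by
        apply Finset.sum_congr rfl
        intro n hn
        rw [Finset.mem_range] at hn
        have h1 : 0 < Wt N (n+1) := Wt_pos (by omega) (by omega)
        have hr := Wt_rec (N := N) n
        field_simp
        nlinarith [hr]
    _ = Real.cos (Real.pi/(N+1)) * ∑ n ∈ range N, (b n)^2 := by rw [Finset.mul_sum]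

lemma sum_Wt_eq {N : ℕ} :
    ∑ n ∈ range N, Wt N (n+1) * Wt N (n+2)
      = Real.cos (Real.pi/(N+1)) * ∑ n ∈ range N, (Wt N (n+1))^2 := by
  have hshift : ∑ n ∈ range N, Wt N n * Wt N (n+1)
      = ∑ n ∈ range N, Wt N (n+1) * Wt N (n+2) := by
    apply shift_sum' (fun m => Wt N m * Wt N (m+1))
    · simp [Wt_zero]
    · simp [Wt_top]
  have hmain : ∑ n ∈ range N, 2 * Real.cos (Real.pi/(N+1)) * (Wt N (n+1))^2
      = ∑ n ∈ range N, (Wt N (n+2) * Wt N (n+1) + Wt N n * Wt N (n+1)) := by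
    apply Finset.sum_congr rfl
    intro n _
    have h := Wt_rec (N := N) n
    linear_combination (-Wt N (n+1)) * h
  rw [Finset.sum_add_distrib] at hmain
  have e1 : ∑ n ∈ range N, Wt N (n+2) * Wt N (n+1)
      = ∑ n ∈ range N, Wt N (n+1) * Wt N (n+2) := by
    apply Finset.sum_congr rfl; intro n _; ring
  rw [e1, hshift] at hmain
  have e2 : ∑ n ∈ range N, 2 * Real.cos (Real.pi/(N+1)) * (Wt N (n+1))^2
      = 2 * (Real.cos (Real.pi/(N+1)) * ∑ n ∈ range N, (Wt N (n+1))^2) := by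
    rw [Finset.mul_sum, Finset.mul_sum]; apply Finset.sum_congr rfl; intro n _; ring
  rw [e2] at hmain
  linarith

/-! ### interpolation path -/

noncomputable def av (N : ℕ) (t : ℝ) (n : ℕ) : ℝ :=
  (1-t) * (if n = 0 then 1 else 0) + t * (if n < N then Wt N (n+1) else 0)

noncomputable def denP (N : ℕ) (t : ℝ) : ℝ := ∑ n ∈ range N, (av N t n)^2
noncomputable def numP (N : ℕ) (t : ℝ) : ℝ := ∑ n ∈ range N, av N t n * av N t (n+1)

lemma av_zero_of_ge {N : ℕ} (hN : 0 < N) (t : ℝ) {n : ℕ} (hn : N ≤ n) : av N t n = 0 := by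
  have h1 : n ≠ 0 := by omega
  have h2 : ¬ n < N := by omega
  simp [av, h1, h2]

lemma av_nonneg {N : ℕ} {t : ℝ} (ht : t ∈ Set.Icc (0:ℝ) 1) (n : ℕ) : 0 ≤ av N t n := by
  obtain ⟨ht0, ht1⟩ := ht
  have h1 : (0:ℝ) ≤ 1 - t := by linarith
  apply add_nonneg
  · apply mul_nonneg h1; split <;> norm_num
  · apply mul_nonneg ht0
    split
    · exact le_of_lt (Wt_pos (by omega) (by omega))
    · exact le_rfl

lemma denP_pos {N : ℕ} (hN : 0 < N) {t : ℝ} (ht : t ∈ Set.Icc (0:ℝ) 1) : 0 < denP N t := by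
  have h0 : 0 < av N t 0 := by
    have hW : 0 < Wt N 1 := Wt_pos le_rfl hN
    obtain ⟨ht0, ht1⟩ := ht
    have : av N t 0 = (1-t) + t * Wt N 1 := by
      simp [av, hN]
    rw [this]
    have hW1 : Wt N 1 ≤ 1 := Real.sin_le_one _
    nlinarith [mul_nonneg (sub_nonneg.mpr ht1) (sub_nonneg.mpr hW1)]
  have hmem : 0 ∈ range N := Finset.mem_range.mpr hN
  calc (0:ℝ) < (av N t 0)^2 := by positivity
    _ ≤ denP N t := Finset.single_le_sum (f := fun n => (av N t n)^2)
        (fun n _ => sq_nonneg _) hmem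

lemma numP_zero {N : ℕ} (hN : 0 < N) : numP N 0 = 0 := by
  apply Finset.sum_eq_zero
  intro n _
  have : av N 0 (n+1) = 0 := by simp [av]
  rw [this, mul_zero]

lemma numP_one {N : ℕ} : numP N 1 = Real.cos (Real.pi/(N+1)) * denP N 1 := by
  have hnum : numP N 1 = ∑ n ∈ range N, Wt N (n+1) * Wt N (n+2) := by
    apply Finset.sum_congr rfl
    intro n hn
    rw [Finset.mem_range] at hn
    have h1 : av N 1 n = Wt N (n+1) := by simp [av, hn]
    have h2 : av N 1 (n+1) = Wt N (n+2) := by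
      by_cases h : n + 1 < N
      · simp [av, h]
      · have hn1 : n + 1 = N := by omega
        have : Wt N (n+2) = 0 := by
          have : n + 2 = N + 1 := by omega
          rw [this]; exact Wt_top
        simp [av, h, hn1, this]
    rw [h1, h2]
  have hden : denP N 1 = ∑ n ∈ range N, (Wt N (n+1))^2 := by
    apply Finset.sum_congr rfl
    intro n hn
    rw [Finset.mem_range] at hn
    simp [av, hn]
  rw [hnum, hden, sum_Wt_eq]

lemma cont_numP {N : ℕ} : Continuous (numP N) := by
  apply continuous_finset_sum
  intro n _
  apply Continuous.mul <;> · unfold av; fun_prop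

lemma cont_denP {N : ℕ} : Continuous (denP N) := by
  apply continuous_finset_sum
  intro n _
  unfold av; fun_prop

theorem stmt_3 {N : ℕ} (hN : 0 < N) :
    numRange (J0 N) = Metric.closedBall (0 : ℂ) (Real.cos (Real.pi / (N + 1))) := by
  ext z
  simp only [numRange, Set.mem_setOf_eq, Metric.mem_closedBall, dist_zero_right]
  constructor
  · rintro ⟨x, hx, rfl⟩
    rw [inner_J0]
    set b : ℕ → ℝ := fun n => if h : n < N then ‖x ⟨n, h⟩‖ else 0 with hbdef
    have hb0 : ∀ n, N ≤ n → b n = 0 := by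
      intro n hn; simp [hbdef, Nat.not_lt.mpr hn]
    have habs : ‖(∑ i : Fin N, (starRingEnd ℂ) (x i) *
        (if h : (i : ℕ) + 1 < N then x ⟨(i : ℕ) + 1, h⟩ else 0))‖
        ≤ ∑ n ∈ range N, b n * b (n+1) := by
      calc ‖(∑ i : Fin N, (starRingEnd ℂ) (x i) *
            (if h : (i : ℕ) + 1 < N then x ⟨(i : ℕ) + 1, h⟩ else 0))‖
          ≤ ∑ i : Fin N, ‖((starRingEnd ℂ) (x i) *
            (if h : (i : ℕ) + 1 < N then x ⟨(i : ℕ) + 1, h⟩ else 0))‖ :=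
            norm_sum_le _ _
        _ = ∑ i : Fin N, b (i : ℕ) * b ((i : ℕ)+1) := by
            apply Finset.sum_congr rfl
            intro i _
            rw [norm_mul, Complex.norm_conj]
            congr 1
            · simp [hbdef, i.isLt]
            · by_cases h : (i : ℕ) + 1 < N
              · simp [hbdef, h]
              · simp [hbdef, h]
        _ = ∑ n ∈ range N, b n * b (n+1) :=
            Fin.sum_univ_eq_sum_range (fun n => b n * b (n+1)) N
    have hsum : ∑ n ∈ range N, (b n)^2 = 1 := by
      have h1 : ∑ n ∈ range N, (b n)^2 = ∑ i : Fin N, ‖x i‖^2 := by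
        rw [← Fin.sum_univ_eq_sum_range (fun n => (b n)^2) N]
        apply Finset.sum_congr rfl
        intro i _
        simp [hbdef, i.isLt]
      have h2 := EuclideanSpace.norm_eq x
      rw [hx] at h2
      have h3 : ∑ i : Fin N, ‖x i‖^2 = 1 := Real.sqrt_eq_one.mp h2.symm
      rw [h1, h3]
    have := quad_bound b hb0
    rw [hsum, mul_one] at this
    exact le_trans habs this
  · intro hz
    set c := Real.cos (Real.pi/(N+1)) with hc
    set r := ‖z‖ with hr
    have hr0 : 0 ≤ r := norm_nonneg z
    -- IVT to find t with numP/denP = r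
    set g : ℝ → ℝ := fun t => numP N t / denP N t with hg
    have hgc : ContinuousOn g (Set.Icc 0 1) := by
      apply ContinuousOn.div cont_numP.continuousOn cont_denP.continuousOn
      intro t ht
      exact ne_of_gt (denP_pos hN ht)
    have hg0 : g 0 = 0 := by simp [hg, numP_zero hN]
    have hg1 : g 1 = c := by
      rw [hg]
      simp only
      rw [numP_one, mul_div_assoc, div_self (ne_of_gt (denP_pos hN (by norm_num)))]
      rw [mul_one]
    have hivt := intermediate_value_Icc (by norm_num : (0:ℝ) ≤ 1) hgc
    have hrmem : r ∈ Set.Icc (g 0) (g 1) := by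
      rw [hg0, hg1]
      exact ⟨hr0, hz⟩
    obtain ⟨t, ht, hgt⟩ := hivt hrmem
    -- phase
    set u : ℂ := if z = 0 then 1 else z / (r : ℂ) with hu
    have hu1 : ‖u‖ = 1 := by
      by_cases h : z = 0
      · simp [hu, h]
      · have hrne : r ≠ 0 := by
          rw [hr]; exact norm_ne_zero_iff.mpr h
        rw [hu, if_neg h, norm_div, Complex.norm_real, Real.norm_eq_abs, abs_of_nonneg hr0, ← hr,
          div_self hrne]
    have huz : (r : ℂ) * u = z := by
      by_cases h : z = 0
      · simp [hu, h, hr]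
      · have hrne : (r : ℂ) ≠ 0 := by
          have : r ≠ 0 := by rw [hr]; exact norm_ne_zero_iff.mpr h
          exact_mod_cast this
        rw [hu, if_neg h]
        field_simp
    have hucu : (starRingEnd ℂ) u * u = 1 := by
      rw [mul_comm, Complex.mul_conj]
      rw [Complex.normSq_eq_norm_sq, hu1]
      norm_num
    have hgt' : numP N t / denP N t = r := hgt
    set s := Real.sqrt (denP N t) with hs
    have hdt : 0 < denP N t := denP_pos hN ht
    have hs0 : 0 < s := Real.sqrt_pos.mpr hdt
    set y : ℕ → ℂ := fun n => u ^ n * ((av N t n / s : ℝ) : ℂ) with hy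
    set x : EuclideanSpace ℂ (Fin N) := WithLp.toLp 2 (fun i => y (i : ℕ)) with hxdef
    have hxi2 : ∀ i : Fin N, ‖x i‖^2 = (av N t (i:ℕ))^2 / denP N t := by
      intro i
      have : x i = y (i:ℕ) := rfl
      rw [this, hy]
      simp only
      rw [norm_mul, norm_pow, hu1, one_pow, one_mul,
        Complex.norm_real]
      rw [Real.norm_eq_abs, sq_abs, div_pow, hs, Real.sq_sqrt hdt.le]
    refine ⟨x, ?_, ?_⟩
    · rw [EuclideanSpace.norm_eq]
      have hsum : ∑ i : Fin N, ‖x i‖^2 = 1 := by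
        rw [Finset.sum_congr rfl (fun i _ => hxi2 i)]
        rw [Fin.sum_univ_eq_sum_range (fun n => (av N t n)^2 / denP N t) N]
        rw [← Finset.sum_div]
        have hd : ∑ n ∈ range N, (av N t n)^2 = denP N t := rfl
        rw [hd, div_self (ne_of_gt hdt)]
      rw [hsum, Real.sqrt_one]
    · rw [inner_J0]
      have hpow : ∀ n : ℕ, (starRingEnd ℂ) u ^ n * u ^ (n+1) = u := by
        intro n
        calc (starRingEnd ℂ) u ^ n * u ^ (n+1)
            = ((starRingEnd ℂ) u * u)^n * u := by rw [mul_pow]; ring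
          _ = u := by rw [hucu, one_pow, one_mul]
      have hterm : ∀ i : Fin N, (starRingEnd ℂ) (x i) *
          (if h : (i:ℕ)+1 < N then x ⟨(i:ℕ)+1, h⟩ else 0)
          = u * (((av N t (i:ℕ) * av N t ((i:ℕ)+1)) / denP N t : ℝ) : ℂ) := by
        intro i
        have hx1 : (if h : (i:ℕ)+1 < N then x ⟨(i:ℕ)+1, h⟩ else 0) = y ((i:ℕ)+1) := by
          by_cases h : (i:ℕ)+1 < N
          · rw [dif_pos h]
          · rw [dif_neg h]
            have h0 : av N t ((i:ℕ)+1) = 0 := av_zero_of_ge hN t (by omega)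
            simp [hy, h0]
        rw [hx1]
        have hxx : x i = y (i:ℕ) := rfl
        rw [hxx, hy]
        simp only
        rw [map_mul, map_pow, Complex.conj_ofReal]
        have hcast : ((av N t (i:ℕ) / s : ℝ) : ℂ) * ((av N t ((i:ℕ)+1) / s : ℝ) : ℂ)
            = (((av N t (i:ℕ) * av N t ((i:ℕ)+1)) / denP N t : ℝ) : ℂ) := by
          rw [← Complex.ofReal_mul]
          congr 1
          rw [div_mul_div_comm, hs, Real.mul_self_sqrt hdt.le]
        calc (starRingEnd ℂ) u ^ (i:ℕ) * ((av N t (i:ℕ) / s : ℝ) : ℂ)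
              * (u ^ ((i:ℕ)+1) * ((av N t ((i:ℕ)+1) / s : ℝ) : ℂ))
            = ((starRingEnd ℂ) u ^ (i:ℕ) * u ^ ((i:ℕ)+1))
              * (((av N t (i:ℕ) / s : ℝ) : ℂ) * ((av N t ((i:ℕ)+1) / s : ℝ) : ℂ)) := by
              ring
          _ = u * (((av N t (i:ℕ) * av N t ((i:ℕ)+1)) / denP N t : ℝ) : ℂ) := by
              rw [hpow, hcast]
      rw [Finset.sum_congr rfl (fun i _ => hterm i), ← Finset.mul_sum]
      have hsum2 : (∑ i : Fin N, (((av N t (i:ℕ) * av N t ((i:ℕ)+1)) / denP N t : ℝ) : ℂ))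
          = ((r : ℝ) : ℂ) := by
        rw [← Complex.ofReal_sum]
        congr 1
        rw [Fin.sum_univ_eq_sum_range (fun n => av N t n * av N t (n+1) / denP N t) N]
        rw [← Finset.sum_div]
        have hn : ∑ n ∈ range N, av N t n * av N t (n+1) = numP N t := rfl
        rw [hn, hgt']
      rw [hsum2, ← huz]
      ring
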